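/- (Correctness of Rule 4) Let G be a bipartite graph in which every vertex has degree at least 2, and let v ∈ V_1(G) be adjacent to every vertex of V_2(G). Then G has a biclique edge cover of size k if and only if G − v has a biclique edge cover of size k. -/
import Mathlib


/-- `(A, B)` is a biclique of the bipartite graph with edge relation `E`. -/
def IsBiclique {α β : Type*} (E : α → β → Prop) (A : Set α) (B : Set β) : Prop :=
  ∀ a ∈ A, ∀ b ∈ B, E a b

/-- The bipartite graph `E` has a biclique edge cover of size `k`. -/
def HasBicCover {α β : Type*} (E : α → β → Prop) (k : ℕ) : Prop :=
  ∃ A : Fin k → Set α, ∃ B : Fin k → Set β,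
    (∀ ℓ, IsBiclique E (A ℓ) (B ℓ)) ∧ ∀ a b, E a b → ∃ ℓ, a ∈ A ℓ ∧ b ∈ B ℓ

/-- Correctness of Rule 4: if every vertex of `G` has degree at least `2` and
    `v ∈ V₁(G)` is adjacent to every vertex of `V₂(G)`, then `G` has a biclique edge
    cover of size `k` iff `G − v` does. -/
theorem rule4_correct {α β : Type*} (E : α → β → Prop) (v : α)
    (hdeg1 : ∀ a : α, ∃ b b' : β, b ≠ b' ∧ E a b ∧ E a b')
    (hdeg2 : ∀ b : β, ∃ a a' : α, a ≠ a' ∧ E a b ∧ E a' b)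
    (hdom : ∀ b : β, E v b) (k : ℕ) :
    HasBicCover E k ↔ HasBicCover (fun a b => a ≠ v ∧ E a b) k := by
  constructor
  · rintro ⟨A, B, hbic, hcov⟩
    refine ⟨fun ℓ => A ℓ \ {v}, B, ?_, ?_⟩
    · intro ℓ a ha b hb
      exact ⟨ha.2, hbic ℓ a ha.1 b hb⟩
    · rintro a b ⟨hav, hab⟩
      obtain ⟨ℓ, hA, hB⟩ := hcov a b hab
      exact ⟨ℓ, ⟨hA, hav⟩, hB⟩
  · rintro ⟨A, B, hbic, hcov⟩
    refine ⟨fun ℓ => A ℓ ∪ {v}, B, ?_, ?_⟩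
    · intro ℓ a ha b hb
      rcases ha with ha | ha
      · exact (hbic ℓ a ha b hb).2
      · rw [Set.mem_singleton_iff] at ha; subst ha; exact hdom b
    · intro a b hab
      by_cases hav : a = v
      · obtain ⟨x, x', hxx, hx, hx'⟩ := hdeg2 b
        rcases eq_or_ne x v with rfl | hxv
        · obtain ⟨ℓ, _, hB⟩ := hcov x' b ⟨fun h => hxx h.symm, hx'⟩
          exact ⟨ℓ, Or.inr hav, hB⟩
        · obtain ⟨ℓ, _, hB⟩ := hcov x b ⟨hxv, hx⟩
          exact ⟨ℓ, Or.inr hav, hB⟩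
      · obtain ⟨ℓ, hA, hB⟩ := hcov a b ⟨hav, hab⟩
        exact ⟨ℓ, Or.inl hA, hB⟩
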